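/- For a connected graph G, the following are equivalent: (i) G is a strong unique independence graph; (ii) G is bipartite and has a spanning tree that is a strong unique independence graph; (iii) G is bipartite and has an α⁻-stable spanning tree all of whose pendant vertices are contained in a color class of that tree whose cardinality is at least that of the other color class; (iv) G is an α⁻-stable bipartite graph having a unique stability system, and this stability system is one of the color classes of G. -/

import Mathlib

open Finset

variable {V : Type*}

/-- A stable (independent) set of vertices of `G`. -/
def IsStableSet (G : SimpleGraph V) (S : Finset V) : Prop :=
  ∀ u ∈ S, ∀ v ∈ S, ¬ G.Adj u v

/-- The stability number `α(G)`: the maximum cardinality of a stable set. -/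
noncomputable def stabNum (G : SimpleGraph V) [Fintype V] : ℕ :=
  sSup {n : ℕ | ∃ S : Finset V, IsStableSet G S ∧ S.card = n}

/-- A stability system of `G`: a stable set of maximum cardinality. -/
def IsStabSystem (G : SimpleGraph V) [Fintype V] (S : Finset V) : Prop :=
  IsStableSet G S ∧ S.card = stabNum G

/-- `G` is α⁻-stable: deleting any edge leaves the stability number unchanged. -/
def AlphaMinusStable (G : SimpleGraph V) [Fintype V] : Prop :=
  ∀ u v : V, G.Adj u v → stabNum (G.deleteEdges {s(u, v)}) = stabNum G

/-- `G` is α⁺-stable: adding any edge of the complement leaves the stability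
number unchanged. -/
def AlphaPlusStable (G : SimpleGraph V) [Fintype V] : Prop :=
  ∀ u v : V, u ≠ v → ¬ G.Adj u v →
    stabNum (G ⊔ SimpleGraph.fromEdgeSet {s(u, v)}) = stabNum G

/-- A matching of `G`, viewed as a set of pairwise non-incident edges. -/
def IsMatchingSet (G : SimpleGraph V) (M : Finset (Sym2 V)) : Prop :=
  (↑M : Set (Sym2 V)) ⊆ G.edgeSet ∧
    ∀ e ∈ M, ∀ f ∈ M, e ≠ f → ∀ v : V, ¬ (v ∈ e ∧ v ∈ f)

/-- The matching number `μ(G)`. -/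
noncomputable def matchNum (G : SimpleGraph V) [Fintype V] : ℕ :=
  sSup {n : ℕ | ∃ M : Finset (Sym2 V), IsMatchingSet G M ∧ M.card = n}

/-- A maximum matching of `G`. -/
def IsMaximumMatching (G : SimpleGraph V) [Fintype V] (M : Finset (Sym2 V)) : Prop :=
  IsMatchingSet G M ∧ M.card = matchNum G

/-- A perfect matching of `G`: a matching covering every vertex. -/
def IsPerfectMatchingSet (G : SimpleGraph V) (M : Finset (Sym2 V)) : Prop :=
  IsMatchingSet G M ∧ ∀ v : V, ∃ e ∈ M, v ∈ e

/-- A pendant vertex: a vertex of degree one. -/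
def IsPendant (G : SimpleGraph V) (v : V) : Prop :=
  (G.neighborSet v).ncard = 1

/-- A set `D` is 2-dominating: every vertex outside `D` has at least two
neighbors in `D`. -/
def Is2Dominating (G : SimpleGraph V) (D : Finset V) : Prop :=
  ∀ v : V, v ∉ D → 2 ≤ ({u : V | u ∈ D ∧ G.Adj v u}).ncard

/-- A chordal graph: no induced cycle on four or more vertices. -/
def IsChordal (G : SimpleGraph V) : Prop :=
  ∀ n : ℕ, 4 ≤ n → IsEmpty (SimpleGraph.cycleGraph n ↪g G)

/-- A bipartite graph: the vertex set is partitioned into two stable sets. -/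
def IsBipartiteGr (G : SimpleGraph V) [Fintype V] [DecidableEq V] : Prop :=
  ∃ C : Finset V, IsStableSet G C ∧ IsStableSet G Cᶜ

/-- A strong unique independence graph: a graph with a unique stability system
whose complement is also stable. -/
def IsStrongUniqueIndep (G : SimpleGraph V) [Fintype V] [DecidableEq V] : Prop :=
  ∃ S : Finset V, IsStabSystem G S ∧ (∀ S' : Finset V, IsStabSystem G S' → S' = S) ∧
    IsStableSet G Sᶜ

/-- A bistable bipartite graph: its two color classes are its only two
stability systems. -/
def IsBistable (G : SimpleGraph V) [Fintype V] [DecidableEq V] : Prop :=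
  ∃ A : Finset V, IsStableSet G A ∧ IsStableSet G Aᶜ ∧
    IsStabSystem G A ∧ IsStabSystem G Aᶜ ∧ A ≠ Aᶜ ∧
    ∀ S : Finset V, IsStabSystem G S → S = A ∨ S = Aᶜ

/-- A vertex cover of `G`. -/
def IsVertexCover (G : SimpleGraph V) (C : Finset V) : Prop :=
  ∀ u v : V, G.Adj u v → u ∈ C ∨ v ∈ C

/-- A minimum vertex cover of `G`. -/
def IsMinVertexCover (G : SimpleGraph V) [Fintype V] (C : Finset V) : Prop :=
  IsVertexCover G C ∧ ∀ C' : Finset V, IsVertexCover G C' → C.card ≤ C'.card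

set_option linter.unusedSectionVars false
set_option maxHeartbeats 1000000

namespace StmtAux
open SimpleGraph
open scoped Classical

variable {V : Type*} [Fintype V] [DecidableEq V]

lemma stabSet_bdd (G : SimpleGraph V) :
    BddAbove {n : ℕ | ∃ S : Finset V, IsStableSet G S ∧ S.card = n} := by
  refine ⟨Fintype.card V, ?_⟩
  rintro n ⟨S, -, rfl⟩
  exact S.card_le_univ

lemma stabSet_nonempty (G : SimpleGraph V) :
    {n : ℕ | ∃ S : Finset V, IsStableSet G S ∧ S.card = n}.Nonempty :=
  ⟨0, ∅, fun u hu => absurd hu (by simp), by simp⟩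

lemma card_le_stabNum {G : SimpleGraph V} {S : Finset V} (hS : IsStableSet G S) :
    S.card ≤ stabNum G :=
  le_csSup (stabSet_bdd G) ⟨S, hS, rfl⟩

lemma stabNum_le {G : SimpleGraph V} {n : ℕ}
    (h : ∀ S : Finset V, IsStableSet G S → S.card ≤ n) : stabNum G ≤ n := by
  apply csSup_le (stabSet_nonempty G)
  rintro m ⟨S, hS, rfl⟩
  exact h S hS

lemma stable_mono {G H : SimpleGraph V} {S : Finset V} (hle : H ≤ G)
    (hS : IsStableSet G S) : IsStableSet H S :=
  fun u hu v hv hadj => hS u hu v hv (hle hadj)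

lemma stabNum_mono {G H : SimpleGraph V} (hle : H ≤ G) : stabNum G ≤ stabNum H :=
  stabNum_le fun _S hS => card_le_stabNum (stable_mono hle hS)

/-- Neighbors of `X` lying outside `B`. -/
noncomputable def nbrF (G : SimpleGraph V) (B X : Finset V) : Finset V :=
  Finset.univ.filter (fun a => a ∉ B ∧ ∃ x ∈ X, G.Adj x a)

lemma mem_nbrF {G : SimpleGraph V} {B X : Finset V} {a : V} :
    a ∈ nbrF G B X ↔ a ∉ B ∧ ∃ x ∈ X, G.Adj x a := by simp [nbrF]

/-- Strict Hall condition implies every stable set is at most `Bᶜ`, with equality only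
for `Bᶜ`. -/
lemma hall_key {G : SimpleGraph V} {B : Finset V} (hB : IsStableSet G B)
    (hall : ∀ X ⊆ B, X.Nonempty → X.card + 1 ≤ (nbrF G B X).card)
    {R : Finset V} (hR : IsStableSet G R) :
    R.card ≤ Bᶜ.card ∧ (Bᶜ.card ≤ R.card → R = Bᶜ) := by
  rcases (R ∩ B).eq_empty_or_nonempty with hX | hX
  · have hsub : R ⊆ Bᶜ := by
      intro v hv
      rw [Finset.mem_compl]
      intro hvB
      exact (Finset.eq_empty_iff_forall_notMem.1 hX v) (Finset.mem_inter.2 ⟨hv, hvB⟩)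
    exact ⟨Finset.card_le_card hsub, fun h => Finset.eq_of_subset_of_card_le hsub h⟩
  · set X := R ∩ B with hXdef
    set N := nbrF G B X with hNdef
    have hXB : X ⊆ B := Finset.inter_subset_right
    have hhall : X.card + 1 ≤ N.card := hall X hXB hX
    have hNB : N ⊆ Bᶜ := fun a ha => Finset.mem_compl.2 (mem_nbrF.1 ha).1
    have hNR : ∀ a ∈ N, a ∉ R := by
      intro a ha haR
      obtain ⟨-, x, hx, hadj⟩ := mem_nbrF.1 ha
      exact hR x (Finset.mem_inter.1 hx).1 a haR hadj
    have hdisj : Disjoint (R \ B) N := by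
      rw [Finset.disjoint_right]
      intro a ha
      simp only [Finset.mem_sdiff]
      exact fun h => hNR a ha h.1
    have hsub2 : (R \ B) ∪ N ⊆ Bᶜ := by
      intro a ha
      rcases Finset.mem_union.1 ha with h | h
      · exact Finset.mem_compl.2 (Finset.mem_sdiff.1 h).2
      · exact hNB h
    have h1 : (R \ B).card + N.card ≤ Bᶜ.card := by
      rw [← Finset.card_union_of_disjoint hdisj]
      exact Finset.card_le_card hsub2
    have h2 : X.card + (R \ B).card = R.card := Finset.card_inter_add_card_sdiff R B
    have : R.card + 1 ≤ Bᶜ.card := by omega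
    exact ⟨by omega, fun h => by omega⟩

/-- Strict Hall + bipartition gives a strong unique independence graph with system `Bᶜ`. -/
lemma hall_SUI {G : SimpleGraph V} {B : Finset V} (hB : IsStableSet G B)
    (hA : IsStableSet G Bᶜ)
    (hall : ∀ X ⊆ B, X.Nonempty → X.card + 1 ≤ (nbrF G B X).card) :
    IsStabSystem G Bᶜ ∧ (∀ S' : Finset V, IsStabSystem G S' → S' = Bᶜ) ∧
      IsStableSet G Bᶜᶜ := by
  have hnum : stabNum G = Bᶜ.card :=
    le_antisymm (stabNum_le fun R hR => (hall_key hB hall hR).1) (card_le_stabNum hA)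
  refine ⟨⟨hA, hnum.symm⟩, ?_, by rwa [compl_compl]⟩
  intro S' hS'
  have : S'.card = Bᶜ.card := by rw [hS'.2, hnum]
  exact (hall_key hB hall hS'.1).2 this.ge

/-- A strong unique independence graph satisfies the strict Hall condition on `Sᶜ`. -/
lemma SUI_hall {G : SimpleGraph V} {S : Finset V} (hS : IsStabSystem G S)
    (huniq : ∀ S' : Finset V, IsStabSystem G S' → S' = S) (hcs : IsStableSet G Sᶜ) :
    ∀ X ⊆ Sᶜ, X.Nonempty → X.card + 1 ≤ (nbrF G Sᶜ X).card := by
  intro X hXS hX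
  by_contra hlt
  push_neg at hlt
  set N := nbrF G Sᶜ X with hNdef
  have hNS : N ⊆ S := by
    intro a ha
    have := (mem_nbrF.1 ha).1
    simpa using this
  set R := (S \ N) ∪ X with hRdef
  have hXS' : ∀ x ∈ X, x ∉ S := fun x hx => Finset.mem_compl.1 (hXS hx)
  have hRstable : IsStableSet G R := by
    intro u hu v hv hadj
    rcases Finset.mem_union.1 hu with hu' | hu' <;> rcases Finset.mem_union.1 hv with hv' | hv'
    · exact hS.1 u (Finset.mem_sdiff.1 hu').1 v (Finset.mem_sdiff.1 hv').1 hadj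
    · exact (Finset.mem_sdiff.1 hu').2 (mem_nbrF.2 ⟨by simp [(Finset.mem_sdiff.1 hu').1],
        v, hv', hadj.symm⟩)
    · exact (Finset.mem_sdiff.1 hv').2 (mem_nbrF.2 ⟨by simp [(Finset.mem_sdiff.1 hv').1],
        u, hu', hadj⟩)
    · exact hcs u (hXS hu') v (hXS hv') hadj
  have hdisj : Disjoint (S \ N) X := by
    rw [Finset.disjoint_right]
    intro x hx
    simp only [Finset.mem_sdiff]
    exact fun h => hXS' x hx h.1
  have hcard : R.card = (S \ N).card + X.card := Finset.card_union_of_disjoint hdisj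
  have hsd : (S \ N).card = S.card - N.card := Finset.card_sdiff_of_subset hNS
  have hNcard : N.card ≤ S.card := Finset.card_le_card hNS
  have hR_le : R.card ≤ S.card := by
    have h := card_le_stabNum hRstable
    rw [← hS.2] at h
    exact h
  have hR_eq : R.card = stabNum G := by rw [← hS.2]; omega
  have := huniq R ⟨hRstable, hR_eq⟩
  obtain ⟨x, hx⟩ := hX
  have hxR : x ∈ R := Finset.mem_union.2 (Or.inr hx)
  rw [this] at hxR
  exact hXS' x hx hxR

end StmtAux
namespace StmtAux
open SimpleGraph
open scoped Classical

variable {V : Type*} [Fintype V] [DecidableEq V]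

/-- A strong unique independence graph is α⁻-stable. -/
lemma SUI_alphaMinus {G : SimpleGraph V} {S : Finset V} (hS : IsStabSystem G S)
    (huniq : ∀ S' : Finset V, IsStabSystem G S' → S' = S) :
    AlphaMinusStable G := by
  intro u v hadj
  set G' := G.deleteEdges {s(u, v)} with hG'
  have hle : G' ≤ G := deleteEdges_le _
  refine le_antisymm ?_ (stabNum_mono hle)
  have hkey : ∀ R : Finset V, IsStableSet G' R → R.card ≤ stabNum G := by
    intro R hR
    by_cases hboth : u ∈ R ∧ v ∈ R
    · have huv : u ≠ v := hadj.ne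
      have herase : ∀ w ∈ ({u, v} : Finset V), IsStableSet G (R.erase w) := by
        intro w hw x hx y hy hxy
        have hxR := Finset.mem_of_mem_erase hx
        have hyR := Finset.mem_of_mem_erase hy
        have hxw := Finset.ne_of_mem_erase hx
        have hyw := Finset.ne_of_mem_erase hy
        have : G'.Adj x y := by
          rw [hG', deleteEdges_adj]
          refine ⟨hxy, ?_⟩
          simp only [Set.mem_singleton_iff, Sym2.eq, Sym2.rel_iff', Prod.mk.injEq,
            Prod.swap_prod_mk]
          rintro (⟨rfl, rfl⟩ | ⟨rfl, rfl⟩)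
          · rcases Finset.mem_insert.1 hw with rfl | hw'
            · exact hxw rfl
            · exact hyw (Finset.mem_singleton.1 hw').symm
          · rcases Finset.mem_insert.1 hw with rfl | hw'
            · exact hyw rfl
            · exact hxw (Finset.mem_singleton.1 hw').symm
        exact hR x hxR y hyR this
      by_contra hgt
      push_neg at hgt
      have hcard : ∀ w ∈ R, (R.erase w).card = R.card - 1 := fun w hw =>
        Finset.card_erase_of_mem hw
      have h1 : (R.erase u).card = stabNum G := by
        have h2 := card_le_stabNum (herase u (by simp))
        have := hcard u hboth.1
        omega
      have h1' : (R.erase v).card = stabNum G := by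
        have h2 := card_le_stabNum (herase v (by simp))
        have := hcard v hboth.2
        omega
      have e1 := huniq _ ⟨herase u (by simp), h1⟩
      have e1' := huniq _ ⟨herase v (by simp), h1'⟩
      have huS : u ∈ S := by
        rw [← e1']
        exact Finset.mem_erase.2 ⟨huv, hboth.1⟩
      rw [← e1] at huS
      exact (Finset.mem_erase.1 huS).1 rfl
    · refine card_le_stabNum (fun x hx y hy hxy => ?_)
      have : G'.Adj x y := by
        rw [hG', deleteEdges_adj]
        refine ⟨hxy, ?_⟩
        simp only [Set.mem_singleton_iff, Sym2.eq, Sym2.rel_iff', Prod.mk.injEq,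
          Prod.swap_prod_mk]
        rintro (⟨rfl, rfl⟩ | ⟨rfl, rfl⟩)
        · exact hboth ⟨hx, hy⟩
        · exact hboth ⟨hy, hx⟩
      exact hR x hx y hy this
  exact stabNum_le hkey

/-- In a connected graph a bipartition into two stable sets is unique. -/
lemma bipartition_unique {H : SimpleGraph V} (hconn : H.Connected) {C D : Finset V}
    (hC : IsStableSet H C) (hC' : IsStableSet H Cᶜ)
    (hD : IsStableSet H D) (hD' : IsStableSet H Dᶜ) : D = C ∨ D = Cᶜ := by
  have flipC : ∀ {u v : V}, H.Adj u v → (u ∈ C ↔ v ∉ C) := by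
    intro u v h
    constructor
    · intro hu hv; exact hC u hu v hv h
    · intro hv
      by_contra hu
      exact hC' u (Finset.mem_compl.2 hu) v (Finset.mem_compl.2 hv) h
  have flipD : ∀ {u v : V}, H.Adj u v → (u ∈ D ↔ v ∉ D) := by
    intro u v h
    constructor
    · intro hu hv; exact hD u hu v hv h
    · intro hv
      by_contra hu
      exact hD' u (Finset.mem_compl.2 hu) v (Finset.mem_compl.2 hv) h
  have wp : ∀ {u v : V}, H.Walk u v → ((u ∈ C ↔ u ∈ D) ↔ (v ∈ C ↔ v ∈ D)) := by
    intro u v w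
    induction w with
    | nil => exact Iff.rfl
    | cons h p ih =>
      refine Iff.trans ?_ ih
      have h1 := flipC h
      have h2 := flipD h
      tauto
  have hne : Nonempty V := hconn.nonempty
  obtain ⟨v0⟩ := hne
  by_cases h0 : (v0 ∈ C ↔ v0 ∈ D)
  · left
    ext v
    have := (wp ((hconn.preconnected v0 v).some)).1 h0
    tauto
  · right
    ext v
    have := (wp ((hconn.preconnected v0 v).some)).not.1 h0
    simp only [Finset.mem_compl]
    tauto

/-- Transfer of the strong unique independence property from a spanning tree. -/
lemma SUI_of_tree {G T : SimpleGraph V} (hle : T ≤ G) (ht : T.IsTree)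
    {C : Finset V} (hC : IsStableSet G C) (hC' : IsStableSet G Cᶜ)
    (hT : IsStrongUniqueIndep T) : IsStrongUniqueIndep G := by
  obtain ⟨S, hSsys, hSuniq, hScompl⟩ := hT
  have hCT : IsStableSet T C := stable_mono hle hC
  have hCT' : IsStableSet T Cᶜ := stable_mono hle hC'
  have hbp := bipartition_unique ht.isConnected hCT hCT' hSsys.1 hScompl
  have hSG : IsStableSet G S ∧ IsStableSet G Sᶜ := by
    rcases hbp with h | h
    · rw [h]; exact ⟨hC, hC'⟩
    · rw [h]; rw [compl_compl]; exact ⟨hC', hC⟩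
  have hnum : stabNum G = S.card := by
    refine le_antisymm (stabNum_le fun R hR => ?_) (card_le_stabNum hSG.1)
    have := card_le_stabNum (stable_mono hle hR)
    rw [← hSsys.2] at this
    exact this
  refine ⟨S, ⟨hSG.1, hnum.symm⟩, ?_, hSG.2⟩
  intro S' hS'
  refine hSuniq S' ⟨stable_mono hle hS'.1, ?_⟩
  rw [← hSsys.2, ← hnum]
  exact hS'.2

end StmtAux
namespace StmtAux
open SimpleGraph
open scoped Classical

variable {V : Type*} [Fintype V] [DecidableEq V]

/-- In a tree, if every vertex of a stable set `B` has at least two neighbors, then the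
strict Hall condition holds. -/
lemma tree_hall {T : SimpleGraph V} (ht : T.IsTree) {B : Finset V} (hB : IsStableSet T B)
    (hdeg : ∀ b ∈ B, 2 ≤ (nbrF T B {b}).card) :
    ∀ X ⊆ B, X.Nonempty → X.card + 1 ≤ (nbrF T B X).card := by
  intro X hXB hX
  have hne : Nonempty V := ht.isConnected.nonempty
  obtain ⟨r⟩ := hne
  have hEU := ht.existsUnique_path
  set P : ∀ x : V, T.Walk x r := fun x => Classical.choose (hEU x r) with hPdef
  have hP : ∀ x, (P x).IsPath := fun x => (Classical.choose_spec (hEU x r)).1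
  have hPu : ∀ (x : V) (q : T.Walk x r), q.IsPath → q = P x :=
    fun x q hq => (Classical.choose_spec (hEU x r)).2 q hq
  set len : V → ℕ := fun x => (P x).length with hlen
  set par : V → V := fun x => (P x).getVert 1 with hpar
  -- dichotomy for a neighbor of x
  have F2 : ∀ x a, T.Adj x a → a = par x ∨ (par a = x ∧ len a = len x + 1) := by
    intro x a hadj
    by_cases hmem : a ∈ (P x).support
    · left
      have h1 : ((P x).takeUntil a hmem).IsPath := (hP x).takeUntil hmem
      have h2 : (Walk.cons hadj Walk.nil : T.Walk x a).IsPath := by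
        simp [hadj.ne]
      have heq : (P x).takeUntil a hmem = Walk.cons hadj Walk.nil := by
        obtain ⟨p₀, hp₀, hp₀u⟩ := hEU x a
        rw [hp₀u _ h1, hp₀u _ h2]
      have h3 := Walk.take_spec (P x) hmem
      rw [heq] at h3
      have hgoal : par x = a := by
        show (P x).getVert 1 = a
        rw [← h3, Walk.cons_append, Walk.getVert_cons_succ, Walk.getVert_zero]
      exact hgoal.symm
    · right
      have hcons : (Walk.cons hadj.symm (P x)).IsPath := (hP x).cons hmem
      have heq := hPu a _ hcons
      constructor
      · rw [hpar]
        simp only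
        rw [← heq, Walk.getVert_cons_succ, Walk.getVert_zero]
      · rw [hlen]
        simp only
        rw [← heq, Walk.length_cons]
  -- parent decreases length
  have F1 : ∀ x, x ≠ r → T.Adj x (par x) ∧ len x = len (par x) + 1 := by
    intro x hxr
    obtain ⟨w, hadj', q, hq⟩ := Walk.exists_eq_cons_of_ne hxr (P x)
    have hqpath : q.IsPath := by
      have := hP x
      rw [hq] at this
      exact this.of_cons
    have hqP := hPu w q hqpath
    have hparx : par x = w := by
      rw [hpar]; simp only
      rw [hq, Walk.getVert_cons_succ, Walk.getVert_zero]
    constructor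
    · rw [hparx]; exact hadj'
    · rw [hlen]; simp only
      rw [hq, Walk.length_cons, hparx, ← hqP]
  -- choose a child for each x ∈ X
  have hchild : ∀ x ∈ X, ∃ a, a ∈ nbrF T B {x} ∧ par a = x ∧ len a = len x + 1 := by
    intro x hx
    have h2 := hdeg x (hXB hx)
    obtain ⟨a₁, ha₁, a₂, ha₂, hne12⟩ := Finset.one_lt_card.1 h2
    have hadj₁ : T.Adj x a₁ := by
      obtain ⟨-, x', hx', h⟩ := mem_nbrF.1 ha₁
      rwa [Finset.mem_singleton.1 hx'] at h
    have hadj₂ : T.Adj x a₂ := by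
      obtain ⟨-, x', hx', h⟩ := mem_nbrF.1 ha₂
      rwa [Finset.mem_singleton.1 hx'] at h
    rcases F2 x a₁ hadj₁ with h | h
    · rcases F2 x a₂ hadj₂ with h' | h'
      · exact absurd (h.trans h'.symm) hne12
      · exact ⟨a₂, ha₂, h'⟩
    · exact ⟨a₁, ha₁, h⟩
  choose! f hf1 hf2 hf3 using hchild
  have hfX : ∀ x ∈ X, f x ∈ nbrF T B X := by
    intro x hx
    obtain ⟨h1, x', hx', h⟩ := mem_nbrF.1 (hf1 x hx)
    exact mem_nbrF.2 ⟨h1, x, hx, by rwa [Finset.mem_singleton.1 hx'] at h⟩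
  have hinj : Set.InjOn f X := by
    intro x hx y hy hxy
    have := hf2 x hx
    rw [hxy, hf2 y hy] at this
    exact this.symm
  have hcardimg : (X.image f).card = X.card := Finset.card_image_of_injOn hinj
  by_cases hr : r ∈ X
  · -- r has two children; one differs from f r
    have h2 := hdeg r (hXB hr)
    obtain ⟨a₁, ha₁, a₂, ha₂, hne12⟩ := Finset.one_lt_card.1 h2
    have hadj₁ : T.Adj r a₁ := by
      obtain ⟨-, x', hx', h⟩ := mem_nbrF.1 ha₁
      rwa [Finset.mem_singleton.1 hx'] at h
    have hadj₂ : T.Adj r a₂ := by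
      obtain ⟨-, x', hx', h⟩ := mem_nbrF.1 ha₂
      rwa [Finset.mem_singleton.1 hx'] at h
    have hPr : Walk.nil = P r := hPu r Walk.nil Walk.IsPath.nil
    have hparr : par r = r := by
      rw [hpar]; simp only
      rw [← hPr]
      rfl
    have hch : ∀ a, T.Adj r a → par a = r := by
      intro a hadj
      rcases F2 r a hadj with h | h
      · rw [hparr] at h; exact absurd h.symm hadj.ne
      · exact h.1
    set g := if f r = a₁ then a₂ else a₁ with hg
    have hgmem : g ∈ nbrF T B {r} := by
      rw [hg]; split <;> assumption
    have hgch : par g = r := by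
      rw [hg]; split
      · exact hch a₂ hadj₂
      · exact hch a₁ hadj₁
    have hgne : g ≠ f r := by
      rw [hg]; split
      · rename_i h; rw [h]; exact hne12.symm
      · rename_i h; exact fun hh => h hh.symm
    have hgX : g ∈ nbrF T B X := by
      obtain ⟨h1, x', hx', h⟩ := mem_nbrF.1 hgmem
      exact mem_nbrF.2 ⟨h1, r, hr, by rwa [Finset.mem_singleton.1 hx'] at h⟩
    have hgnimg : g ∉ X.image f := by
      intro hmem
      obtain ⟨x, hx, hfx⟩ := Finset.mem_image.1 hmem
      have : x = r := by rw [← hf2 x hx, hfx, hgch]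
      rw [this] at hfx
      exact hgne hfx.symm
    have hsub : insert g (X.image f) ⊆ nbrF T B X := by
      intro a ha
      rcases Finset.mem_insert.1 ha with rfl | ha'
      · exact hgX
      · obtain ⟨x, hx, rfl⟩ := Finset.mem_image.1 ha'
        exact hfX x hx
    calc X.card + 1 = (insert g (X.image f)).card := by
          rw [Finset.card_insert_of_notMem hgnimg, hcardimg]
      _ ≤ (nbrF T B X).card := Finset.card_le_card hsub
  · -- take x* of minimal length; its parent is an extra neighbor
    obtain ⟨x₀, hx₀X, hmin⟩ := Finset.exists_min_image X len hX
    have hx₀r : x₀ ≠ r := fun h => hr (h ▸ hx₀X)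
    obtain ⟨hadjp, hlenp⟩ := F1 x₀ hx₀r
    set p := par x₀ with hp
    have hpB : p ∉ B := by
      intro hpB
      exact hB x₀ (hXB hx₀X) p hpB hadjp
    have hpX : p ∈ nbrF T B X := mem_nbrF.2 ⟨hpB, x₀, hx₀X, hadjp⟩
    have hpnimg : p ∉ X.image f := by
      intro hmem
      obtain ⟨x, hx, hfx⟩ := Finset.mem_image.1 hmem
      have h1 := hf3 x hx
      rw [hfx] at h1
      have h2 := hmin x hx
      omega
    have hsub : insert p (X.image f) ⊆ nbrF T B X := by
      intro a ha
      rcases Finset.mem_insert.1 ha with rfl | ha'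
      · exact hpX
      · obtain ⟨x, hx, rfl⟩ := Finset.mem_image.1 ha'
        exact hfX x hx
    calc X.card + 1 = (insert p (X.image f)).card := by
          rw [Finset.card_insert_of_notMem hpnimg, hcardimg]
      _ ≤ (nbrF T B X).card := Finset.card_le_card hsub

end StmtAux
namespace StmtAux
open SimpleGraph
open scoped Classical

variable {V : Type*} [Fintype V] [DecidableEq V]

lemma reachable_eq_of_isolated {H : SimpleGraph V} {z u : V} (hz : ∀ w, ¬ H.Adj z w)
    (h : H.Reachable z u) : z = u := by
  obtain ⟨w⟩ := h
  cases w with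
  | nil => rfl
  | cons h p => exact absurd h (hz _)

/-- Adding an edge between two vertices in different components of an acyclic graph
keeps it acyclic. -/
lemma acyclic_add_edge {H : SimpleGraph V} (hac : H.IsAcyclic) {x y : V} (hxy : x ≠ y)
    (hreach : ¬ H.Reachable x y) : (H ⊔ SimpleGraph.fromEdgeSet {s(x, y)}).IsAcyclic := by
  set K := H ⊔ SimpleGraph.fromEdgeSet {s(x, y)} with hK
  intro v c hc
  by_cases he : s(x, y) ∈ c.edges
  · have hKadj : K.Adj x y := by
      rw [hK, sup_adj, fromEdgeSet_adj]
      exact Or.inr ⟨Set.mem_singleton _, hxy⟩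
    have hbridge : K.IsBridge s(x, y) := by
      rw [isBridge_iff]
      refine fun hr => hreach (hr.mono ?_)
      intro a b hab
      rw [deleteEdges_adj] at hab
      obtain ⟨hab1, hab2⟩ := hab
      rw [hK, sup_adj] at hab1
      rcases hab1 with h | h
      · exact h
      · exact absurd ((fromEdgeSet_adj _).1 h).1 hab2
    rw [isBridge_iff_adj_and_forall_cycle_notMem hKadj] at hbridge
    exact hbridge c hc he
  · have hsub : ∀ e ∈ c.edges, e ∈ H.edgeSet := by
      intro e hee
      have h1 : e ∈ K.edgeSet := c.edges_subset_edgeSet hee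
      rw [hK, edgeSet_sup] at h1
      rcases h1 with h | h
      · exact h
      · rw [edgeSet_fromEdgeSet] at h
        obtain ⟨h2, -⟩ := h
        rw [Set.mem_singleton_iff] at h2
        exact absurd (h2 ▸ hee) he
    exact hac (c.transfer H hsub) (hc.transfer hsub)

/-- A walk avoiding `z` can be transferred to a graph agreeing off `z`. -/
lemma reachable_of_walk_avoid {K H : SimpleGraph V} {z : V}
    (hagree : ∀ u v, K.Adj u v → u ≠ z → v ≠ z → H.Adj u v) :
    ∀ {x y : V} (w : K.Walk x y), z ∉ w.support → H.Reachable x y := by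
  intro x y w
  induction w with
  | nil => exact fun _ => Reachable.refl _
  | cons h p ih =>
    intro hz
    rw [Walk.support_cons, List.mem_cons] at hz
    push_neg at hz
    have hz2 : z ∉ p.support := hz.2
    have hxz : _ ≠ z := fun hh => hz.1 hh.symm
    have hyz : _ ≠ z := fun hh => hz2 (hh ▸ p.start_mem_support)
    exact (Adj.reachable (hagree _ _ h hxz hyz)).trans (ih hz2)
end StmtAux
namespace StmtAux
open SimpleGraph
open scoped Classical

variable {V : Type*} [Fintype V] [DecidableEq V]

lemma nbrF_mono (G : SimpleGraph V) (B : Finset V) {X Y : Finset V} (h : X ⊆ Y) :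
    nbrF G B X ⊆ nbrF G B Y := by
  intro a ha
  obtain ⟨h1, x, hx, hadj⟩ := mem_nbrF.1 ha
  exact mem_nbrF.2 ⟨h1, x, h hx, hadj⟩

lemma nbrF_union (G : SimpleGraph V) (B X Y : Finset V) :
    nbrF G B (X ∪ Y) = nbrF G B X ∪ nbrF G B Y := by
  ext a
  simp only [mem_nbrF, Finset.mem_union]
  constructor
  · rintro ⟨h1, x, hx | hx, hadj⟩
    · exact Or.inl ⟨h1, x, hx, hadj⟩
    · exact Or.inr ⟨h1, x, hx, hadj⟩
  · rintro (⟨h1, x, hx, hadj⟩ | ⟨h1, x, hx, hadj⟩)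
    · exact ⟨h1, x, Or.inl hx, hadj⟩
    · exact ⟨h1, x, Or.inr hx, hadj⟩

lemma cn_submod (G : SimpleGraph V) (c : V → V) (B X Y : Finset V) :
    ((nbrF G B (X ∪ Y)).image c).card + ((nbrF G B (X ∩ Y)).image c).card ≤
      ((nbrF G B X).image c).card + ((nbrF G B Y).image c).card := by
  have h1 : (nbrF G B (X ∪ Y)).image c = (nbrF G B X).image c ∪ (nbrF G B Y).image c := by
    rw [nbrF_union, Finset.image_union]
  have h2 : (nbrF G B (X ∩ Y)).image c ⊆ (nbrF G B X).image c ∩ (nbrF G B Y).image c := by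
    intro γ hγ
    obtain ⟨a, ha, rfl⟩ := Finset.mem_image.1 hγ
    have hX := nbrF_mono G B (Finset.inter_subset_left (s₂ := Y)) ha
    have hY := nbrF_mono G B (Finset.inter_subset_right (s₁ := X)) ha
    exact Finset.mem_inter.2 ⟨Finset.mem_image_of_mem c hX, Finset.mem_image_of_mem c hY⟩
  calc ((nbrF G B (X ∪ Y)).image c).card + ((nbrF G B (X ∩ Y)).image c).card
      ≤ ((nbrF G B X).image c ∪ (nbrF G B Y).image c).card
        + ((nbrF G B X).image c ∩ (nbrF G B Y).image c).card := by
        rw [h1]; exact Nat.add_le_add_left (Finset.card_le_card h2) _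
    _ = ((nbrF G B X).image c).card + ((nbrF G B Y).image c).card :=
        Finset.card_union_add_card_inter _ _

lemma merge_card_ge (W : Finset V) (p q : V) :
    W.card ≤ (W.image (fun γ => if γ = q then p else γ)).card + 1 := by
  have hsub : W ⊆ (W.image (fun γ => if γ = q then p else γ)) ∪ {q} := by
    intro γ hγ
    by_cases hq : γ = q
    · exact Finset.mem_union_right _ (by simp [hq])
    · refine Finset.mem_union_left _ (Finset.mem_image.2 ⟨γ, hγ, by simp [hq]⟩)
  calc W.card ≤ ((W.image (fun γ => if γ = q then p else γ)) ∪ {q}).card :=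
        Finset.card_le_card hsub
    _ ≤ _ + ({q} : Finset V).card := Finset.card_union_le _ _
    _ = _ + 1 := by simp

lemma merge_card_eq (W : Finset V) (p q : V) (h : ¬(p ∈ W ∧ q ∈ W)) :
    (W.image (fun γ => if γ = q then p else γ)).card = W.card := by
  apply Finset.card_image_of_injOn
  intro γ hγ δ hδ hm
  simp only at hm
  by_cases hγq : γ = q <;> by_cases hδq : δ = q
  · rw [hγq, hδq]
  · rw [if_pos hγq, if_neg hδq] at hm
    exact absurd ⟨hm ▸ hδ, hγq ▸ hγ⟩ h
  · rw [if_neg hγq, if_pos hδq] at hm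
    exact absurd ⟨hm ▸ hγ, hδq ▸ hδ⟩ h
  · rwa [if_neg hγq, if_neg hδq] at hm

end StmtAux
namespace StmtAux
open SimpleGraph
open scoped Classical

variable {V : Type*} [Fintype V] [DecidableEq V]

/-- Core construction: a "cluster-acyclic" edge set giving each vertex of `B` degree 2. -/
lemma core (G : SimpleGraph V) :
    ∀ (k : ℕ) (B : Finset V) (c : V → V), B.card = k →
    IsStableSet G B →
    (∀ a, a ∉ B → c a ∉ B) →
    (∀ X ⊆ B, X.Nonempty → X.card + 1 ≤ ((nbrF G B X).image c).card) →
    ∃ E : Finset (Sym2 V),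
      (∀ e ∈ E, ∃ a b, a ∉ B ∧ b ∈ B ∧ G.Adj a b ∧ e = s(a, b)) ∧
      (∀ b ∈ B, (E.filter (fun e => b ∈ e)).card = 2) ∧
      Set.InjOn (Sym2.map (fun v => if v ∈ B then v else c v)) ↑E ∧
      (SimpleGraph.fromEdgeSet
        (Sym2.map (fun v => if v ∈ B then v else c v) '' ↑E)).IsAcyclic := by
  intro k
  induction k with
  | zero =>
    intro B c hcard _ _ _
    have hB : B = ∅ := Finset.card_eq_zero.1 hcard
    refine ⟨∅, by simp, by simp [hB], by simp, ?_⟩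
    simp only [Finset.coe_empty, Set.image_empty, fromEdgeSet_empty]
    exact isAcyclic_bot
  | succ k ih =>
    intro B c hcard hstab hcB hhall
    have hBne : B.Nonempty := Finset.card_pos.1 (by omega)
    -- choose b0 with the key property
    obtain ⟨b0, hb0B, hKEY⟩ : ∃ b0 ∈ B, ∀ Y, Y ⊆ B.erase b0 → Y.Nonempty →
        ((nbrF G B Y).image c).card = Y.card + 1 →
        ∀ γ1 γ2, γ1 ∈ (nbrF G B {b0}).image c → γ2 ∈ (nbrF G B {b0}).image c →
          γ1 ∈ (nbrF G B Y).image c → γ2 ∈ (nbrF G B Y).image c → γ1 = γ2 := by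
      by_cases ht : ∃ X, X ⊆ B ∧ X.Nonempty ∧ ((nbrF G B X).image c).card = X.card + 1
      · set fam := B.powerset.filter
          (fun X => X.Nonempty ∧ ((nbrF G B X).image c).card = X.card + 1) with hfam
        have hfamne : fam.Nonempty := by
          obtain ⟨X, h1, h2, h3⟩ := ht
          exact ⟨X, Finset.mem_filter.2 ⟨Finset.mem_powerset.2 h1, h2, h3⟩⟩
        obtain ⟨X₀, hX₀fam, hX₀min⟩ := Finset.exists_min_image fam Finset.card hfamne
        obtain ⟨hX₀P, hX₀ne, hX₀t⟩ := Finset.mem_filter.1 hX₀fam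
        have hX₀B : X₀ ⊆ B := Finset.mem_powerset.1 hX₀P
        obtain ⟨b0, hb0⟩ := hX₀ne
        refine ⟨b0, hX₀B hb0, ?_⟩
        intro Y hYB' hYne hYt γ1 γ2 hγ1b hγ2b hγ1Y hγ2Y
        by_contra hne
        have hYB : Y ⊆ B := hYB'.trans (Finset.erase_subset _ _)
        have hb0Y : b0 ∉ Y := fun h => (Finset.mem_erase.1 (hYB' h)).1 rfl
        have hUB : X₀ ∪ Y ⊆ B := Finset.union_subset hX₀B hYB
        have hUne : (X₀ ∪ Y).Nonempty := ⟨b0, Finset.mem_union_left _ hb0⟩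
        have hU := hhall _ hUB hUne
        have hdisj : X₀ ∩ Y = ∅ := by
          by_contra hne'
          have hne'' : (X₀ ∩ Y).Nonempty := Finset.nonempty_iff_ne_empty.2 hne'
          have hsubm := cn_submod G c B X₀ Y
          have hI := hhall _ ((Finset.inter_subset_left (s₂ := Y)).trans hX₀B) hne''
          have hcui := Finset.card_union_add_card_inter X₀ Y
          have hIt : ((nbrF G B (X₀ ∩ Y)).image c).card = (X₀ ∩ Y).card + 1 := by omega
          have hmem : X₀ ∩ Y ∈ fam := Finset.mem_filter.2
            ⟨Finset.mem_powerset.2 ((Finset.inter_subset_left (s₂ := Y)).trans hX₀B),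
              hne'', hIt⟩
          have hminle := hX₀min _ hmem
          have hss : X₀ ∩ Y ⊂ X₀ := by
            refine ⟨Finset.inter_subset_left, fun hsub' => ?_⟩
            exact hb0Y (Finset.mem_inter.1 (hsub' hb0)).2
          have := Finset.card_lt_card hss
          omega
        have hdisj' : Disjoint X₀ Y := Finset.disjoint_iff_inter_eq_empty.2 hdisj
        have hcU : (X₀ ∪ Y).card = X₀.card + Y.card := Finset.card_union_of_disjoint hdisj'
        have hγ1X : γ1 ∈ (nbrF G B X₀).image c :=
          Finset.image_subset_image (nbrF_mono G B (Finset.singleton_subset_iff.2 hb0)) hγ1b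
        have hγ2X : γ2 ∈ (nbrF G B X₀).image c :=
          Finset.image_subset_image (nbrF_mono G B (Finset.singleton_subset_iff.2 hb0)) hγ2b
        have hcup : (nbrF G B (X₀ ∪ Y)).image c
            = (nbrF G B X₀).image c ∪ (nbrF G B Y).image c := by
          rw [nbrF_union, Finset.image_union]
        rw [hcup] at hU
        have h2le : 2 ≤ ((nbrF G B X₀).image c ∩ (nbrF G B Y).image c).card :=
          Finset.one_lt_card.2 ⟨γ1, Finset.mem_inter.2 ⟨hγ1X, hγ1Y⟩,
            γ2, Finset.mem_inter.2 ⟨hγ2X, hγ2Y⟩, hne⟩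
        have hcai := Finset.card_union_add_card_inter
          ((nbrF G B X₀).image c) ((nbrF G B Y).image c)
        omega
      · obtain ⟨b0, hb0⟩ := hBne
        refine ⟨b0, hb0, ?_⟩
        intro Y hYB' hYne hYt
        exact absurd ⟨Y, hYB'.trans (Finset.erase_subset _ _), hYne, hYt⟩ ht
    -- two neighbors of b0 in distinct clusters
    have hb02 : 2 ≤ ((nbrF G B {b0}).image c).card :=
      hhall {b0} (Finset.singleton_subset_iff.2 hb0B) ⟨b0, Finset.mem_singleton_self b0⟩
    obtain ⟨γ1, hγ1, γ2, hγ2, hγne⟩ := Finset.one_lt_card.1 hb02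
    obtain ⟨a1, ha1, hc1⟩ := Finset.mem_image.1 hγ1
    obtain ⟨a2, ha2, hc2⟩ := Finset.mem_image.1 hγ2
    have hA1B : a1 ∉ B := (mem_nbrF.1 ha1).1
    have hA2B : a2 ∉ B := (mem_nbrF.1 ha2).1
    have hAdj1 : G.Adj b0 a1 := by
      obtain ⟨-, x, hx, h⟩ := mem_nbrF.1 ha1
      rwa [Finset.mem_singleton.1 hx] at h
    have hAdj2 : G.Adj b0 a2 := by
      obtain ⟨-, x, hx, h⟩ := mem_nbrF.1 ha2
      rwa [Finset.mem_singleton.1 hx] at h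
    have hca12 : c a1 ≠ c a2 := by rw [hc1, hc2]; exact hγne
    have ha12 : a1 ≠ a2 := fun h => hca12 (by rw [h])
    -- recursive data
    set B' := B.erase b0 with hB'
    set m : V → V := fun γ => if γ = c a2 then c a1 else γ with hm
    set c' : V → V := fun v => if c v = c a2 ∨ v = b0 then c a1 else c v with hc'
    have hcard' : B'.card = k := by
      rw [hB', Finset.card_erase_of_mem hb0B, hcard]
      omega
    have hB'B : B' ⊆ B := Finset.erase_subset _ _
    have hstab' : IsStableSet G B' := fun u hu v hv => hstab u (hB'B hu) v (hB'B hv)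
    have hcB1 : c a1 ∉ B := hcB a1 hA1B
    have hcB2 : c a2 ∉ B := hcB a2 hA2B
    have hcB' : ∀ a, a ∉ B' → c' a ∉ B' := by
      intro a ha
      rw [hc']
      simp only
      split
      · exact fun h => hcB1 (hB'B h)
      · rename_i hcond
        push_neg at hcond
        have haB : a ∉ B := by
          intro haB
          rcases Finset.mem_erase.1 (by exact Finset.mem_erase.2 ⟨hcond.2, haB⟩) with _
          exact ha (Finset.mem_erase.2 ⟨hcond.2, haB⟩)
        exact fun h => hcB a haB (hB'B h)
    have hc'm : ∀ v, v ≠ b0 → c' v = m (c v) := by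
      intro v hv
      rw [hc', hm]
      simp only [hv, or_false]
    -- neighborhoods are unchanged
    have hnbr' : ∀ Y : Finset V, Y ⊆ B' → nbrF G B' Y = nbrF G B Y := by
      intro Y hY
      ext a
      simp only [mem_nbrF]
      constructor
      · rintro ⟨h1, x, hx, hadj⟩
        refine ⟨?_, x, hx, hadj⟩
        intro haB
        by_cases hab0 : a = b0
        · exact hstab x (hB'B (hY hx)) a haB hadj
        · exact h1 (Finset.mem_erase.2 ⟨hab0, haB⟩)
      · rintro ⟨h1, x, hx, hadj⟩
        exact ⟨fun h => h1 (hB'B h), x, hx, hadj⟩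
    have hhall' : ∀ Y ⊆ B', Y.Nonempty → Y.card + 1 ≤ ((nbrF G B' Y).image c').card := by
      intro Y hY hYne
      rw [hnbr' Y hY]
      have hYB : Y ⊆ B := hY.trans hB'B
      have hc := hhall Y hYB hYne
      have hb0nbr : ∀ a ∈ nbrF G B Y, a ≠ b0 := by
        intro a ha
        exact fun h => (mem_nbrF.1 ha).1 (h ▸ hb0B)
      have him : (nbrF G B Y).image c' = ((nbrF G B Y).image c).image m := by
        rw [Finset.image_image]
        exact Finset.image_congr (fun a ha => hc'm a (hb0nbr a ha))
      rw [him]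
      by_cases htY : ((nbrF G B Y).image c).card = Y.card + 1
      · have hnb : ¬(c a1 ∈ (nbrF G B Y).image c ∧ c a2 ∈ (nbrF G B Y).image c) := by
          rintro ⟨h1, h2⟩
          exact hca12 (hKEY Y hY hYne htY (c a1) (c a2)
            (hc1 ▸ hγ1) (hc2 ▸ hγ2) h1 h2)
        rw [hm, merge_card_eq _ _ _ hnb]
        omega
      · have := merge_card_ge ((nbrF G B Y).image c) (c a1) (c a2)
        rw [hm]
        omega
    obtain ⟨E'', hform'', hdeg'', hinj'', hacy''⟩ := ih B' c' hcard' hstab' hcB' hhall'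
    -- the new edge set
    set e1 : Sym2 V := s(a1, b0) with he1
    set e2 : Sym2 V := s(a2, b0) with he2
    set E : Finset (Sym2 V) := insert e1 (insert e2 E'') with hE
    have hb0a1 : a1 ≠ b0 := fun h => hA1B (h ▸ hb0B)
    have hb0a2 : a2 ≠ b0 := fun h => hA2B (h ▸ hb0B)
    have he12 : e1 ≠ e2 := by
      rw [he1, he2]
      intro h
      rcases Sym2.eq_iff.1 h with ⟨h1, -⟩ | ⟨h1, h2⟩
      · exact ha12 h1
      · exact hb0a1 h1
    -- edges of E'' do not contain b0, and their non-B endpoints avoid B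
    have hformB : ∀ e ∈ E'', ∃ a b, a ∉ B ∧ b ∈ B' ∧ G.Adj a b ∧ e = s(a, b) := by
      intro e he
      obtain ⟨a, b, haB', hbB', hadj, rfl⟩ := hform'' e he
      refine ⟨a, b, ?_, hbB', hadj, rfl⟩
      intro haB
      by_cases hab0 : a = b0
      · exact hstab a (hab0 ▸ hb0B) b (hB'B hbB') hadj
      · exact haB' (Finset.mem_erase.2 ⟨hab0, haB⟩)
    have hb0E'' : ∀ e ∈ E'', b0 ∉ e := by
      intro e he hmem
      obtain ⟨a, b, haB, hbB', hadj, rfl⟩ := hformB e he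
      rcases Sym2.mem_iff.1 hmem with h | h
      · exact haB (h ▸ hb0B)
      · exact (Finset.mem_erase.1 hbB').1 h.symm
    have hfe1 : Sym2.map (fun v => if v ∈ B then v else c v) e1 = s(c a1, b0) := by
      rw [he1, Sym2.map_pair_eq]
      simp [hA1B, hb0B]
    have hfe2 : Sym2.map (fun v => if v ∈ B then v else c v) e2 = s(c a2, b0) := by
      rw [he2, Sym2.map_pair_eq]
      simp [hA2B, hb0B]
    have hmap'' : ∀ e ∈ E'', Sym2.map (fun v => if v ∈ B' then v else c' v) e
        = Sym2.map m (Sym2.map (fun v => if v ∈ B then v else c v) e) := by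
      intro e he
      obtain ⟨a, b, haB, hbB', hadj, rfl⟩ := hformB e he
      have haB' : a ∉ B' := fun h => haB (hB'B h)
      have hab0 : a ≠ b0 := fun h => haB (h ▸ hb0B)
      have hbca2 : b ≠ c a2 := fun h => hcB2 (h ▸ hB'B hbB')
      rw [Sym2.map_pair_eq, Sym2.map_pair_eq, Sym2.map_pair_eq]
      rw [if_neg haB, if_neg haB', if_pos (hB'B hbB'), if_pos hbB']
      have h1 : m (c a) = c' a := (hc'm a hab0).symm
      have h2 : m b = b := by rw [hm]; simp [hbca2]
      rw [h1, h2]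
    have hb0Φ : ∀ e ∈ E'', b0 ∉ Sym2.map (fun v => if v ∈ B then v else c v) e := by
      intro e he hmem
      obtain ⟨a, b, haB, hbB', hadj, rfl⟩ := hformB e he
      rw [Sym2.map_pair_eq] at hmem
      rcases Sym2.mem_iff.1 hmem with h | h
      · rw [if_neg haB] at h
        exact hcB a haB (h ▸ hb0B)
      · rw [if_pos (hB'B hbB')] at h
        exact (Finset.mem_erase.1 hbB').1 h.symm
    refine ⟨E, ?_, ?_, ?_, ?_⟩
    · -- form
      intro e he
      rcases Finset.mem_insert.1 he with rfl | he'
      · exact ⟨a1, b0, hA1B, hb0B, hAdj1.symm, rfl⟩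
      rcases Finset.mem_insert.1 he' with rfl | he''
      · exact ⟨a2, b0, hA2B, hb0B, hAdj2.symm, rfl⟩
      · obtain ⟨a, b, haB, hbB', hadj, rfl⟩ := hformB e he''
        exact ⟨a, b, haB, hB'B hbB', hadj, rfl⟩
    · -- degrees
      intro b hbB
      by_cases hbb0 : b = b0
      · subst hbb0
        have hbe1 : b ∈ e1 := by rw [he1]; simp
        have hbe2 : b ∈ e2 := by rw [he2]; simp
        have hfe : E.filter (fun e => b ∈ e) = {e1, e2} := by
          ext e
          simp only [Finset.mem_filter, hE, Finset.mem_insert, Finset.mem_singleton]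
          constructor
          · rintro ⟨(rfl | rfl | he), hbe⟩
            · exact Or.inl rfl
            · exact Or.inr rfl
            · exact absurd hbe (hb0E'' _ he)
          · rintro (rfl | rfl)
            · exact ⟨Or.inl rfl, hbe1⟩
            · exact ⟨Or.inr (Or.inl rfl), hbe2⟩
        rw [hfe, Finset.card_insert_of_notMem (by simp [he12]), Finset.card_singleton]
      · have hbB' : b ∈ B' := Finset.mem_erase.2 ⟨hbb0, hbB⟩
        have hbe1 : b ∉ e1 := by
          rw [he1]
          simp only [Sym2.mem_iff]
          rintro (rfl | rfl)
          · exact hA1B hbB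
          · exact hbb0 rfl
        have hbe2 : b ∉ e2 := by
          rw [he2]
          simp only [Sym2.mem_iff]
          rintro (rfl | rfl)
          · exact hA2B hbB
          · exact hbb0 rfl
        have hfe : E.filter (fun e => b ∈ e) = E''.filter (fun e => b ∈ e) := by
          ext e
          simp only [Finset.mem_filter, hE, Finset.mem_insert]
          constructor
          · rintro ⟨(rfl | rfl | he), hbe⟩
            · exact absurd hbe hbe1
            · exact absurd hbe hbe2
            · exact ⟨he, hbe⟩
          · rintro ⟨he, hbe⟩
            exact ⟨Or.inr (Or.inr he), hbe⟩
        rw [hfe]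
        exact hdeg'' b hbB'
    · -- injectivity
      intro x hx y hy hxy
      rw [Finset.mem_coe, hE, Finset.mem_insert, Finset.mem_insert] at hx hy
      rcases hx with rfl | rfl | hx <;> rcases hy with rfl | rfl | hy
      · rfl
      · exfalso
        rw [hfe1, hfe2] at hxy
        rcases Sym2.eq_iff.1 hxy with ⟨h1, -⟩ | ⟨h1, -⟩
        · exact hca12 h1
        · exact hcB1 (h1 ▸ hb0B)
      · exfalso
        apply hb0Φ y hy
        rw [← hxy, hfe1]
        simp
      · exfalso
        rw [hfe1, hfe2] at hxy
        rcases Sym2.eq_iff.1 hxy with ⟨h1, -⟩ | ⟨h1, -⟩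
        · exact hca12 h1.symm
        · exact hcB2 (h1 ▸ hb0B)
      · rfl
      · exfalso
        apply hb0Φ y hy
        rw [← hxy, hfe2]
        simp
      · exfalso
        apply hb0Φ x hx
        rw [hxy, hfe1]
        simp
      · exfalso
        apply hb0Φ x hx
        rw [hxy, hfe2]
        simp
      · have := hinj'' (Finset.mem_coe.2 hx) (Finset.mem_coe.2 hy)
        apply this
        rw [hmap'' x hx, hmap'' y hy, hxy]
    · -- acyclicity
      set H := SimpleGraph.fromEdgeSet
        (Sym2.map (fun v => if v ∈ B then v else c v) '' (↑E'' : Set (Sym2 V))) with hH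
      set Gq := SimpleGraph.fromEdgeSet
        (Sym2.map (fun v => if v ∈ B' then v else c' v) '' (↑E'' : Set (Sym2 V))) with hGq
      have hmnotB : ∀ w, w ∉ B → m w ∉ B := by
        intro w hw
        rw [hm]
        simp only
        split
        · exact hcB1
        · exact hw
      have hmB : ∀ w, w ∈ B → m w = w := by
        intro w hw
        rw [hm]
        simp only
        rw [if_neg (fun h : w = c a2 => hcB2 (by rw [← h]; exact hw))]
      have homadj : ∀ u v : V, H.Adj u v → Gq.Adj (m u) (m v) := by
        intro u v huv
        rw [hH, fromEdgeSet_adj] at huv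
        obtain ⟨⟨e, heE, heq⟩, hne⟩ := huv
        have heE' : e ∈ E'' := heE
        rw [hGq, fromEdgeSet_adj]
        constructor
        · exact ⟨e, heE, by rw [hmap'' e heE', heq, Sym2.map_pair_eq]⟩
        · obtain ⟨a, b, haB, hbB', hadj, rfl⟩ := hformB e heE'
          rw [Sym2.map_pair_eq, if_neg haB, if_pos (hB'B hbB')] at heq
          have hmca : m (c a) ∉ B := hmnotB _ (hcB a haB)
          have hmb : m b = b := hmB b (hB'B hbB')
          rcases Sym2.eq_iff.1 heq with ⟨h1, h2⟩ | ⟨h1, h2⟩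
          · rw [← h1, ← h2, hmb]
            exact fun h => hmca (by rw [h]; exact hB'B hbB')
          · rw [← h1, ← h2, hmb]
            exact fun h => hmca (by rw [← h]; exact hB'B hbB')
      have hinjm : ∀ d1 ∈ Sym2.map (fun v => if v ∈ B then v else c v) '' (↑E'' : Set (Sym2 V)),
          ∀ d2 ∈ Sym2.map (fun v => if v ∈ B then v else c v) '' (↑E'' : Set (Sym2 V)),
          Sym2.map m d1 = Sym2.map m d2 → d1 = d2 := by
        rintro d1 ⟨x, hx, rfl⟩ d2 ⟨y, hy, rfl⟩ heq
        have hx' : x ∈ E'' := hx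
        have hy' : y ∈ E'' := hy
        rw [← hmap'' x hx', ← hmap'' y hy'] at heq
        rw [hinj'' hx hy heq]
      have hb0iso : ∀ w, ¬ H.Adj b0 w := by
        intro w hw
        rw [hH, fromEdgeSet_adj] at hw
        obtain ⟨⟨e, heE, heq⟩, -⟩ := hw
        exact hb0Φ e heE (by rw [heq]; simp)
      have hHedge : ∀ d ∈ H.edgeSet,
          d ∈ Sym2.map (fun v => if v ∈ B then v else c v) '' (↑E'' : Set (Sym2 V)) := by
        intro d hd
        rw [hH, edgeSet_fromEdgeSet] at hd
        exact hd.1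
      set hom : H →g Gq := ⟨m, fun {u v} h => homadj u v h⟩ with hhom
      have hm2 : m (c a2) = c a1 := by rw [hm]; simp
      have hm1 : m (c a1) = c a1 := by rw [hm]; simp only; rw [if_neg hca12]
      have hhm1 : hom (c a1) = c a1 := hm1
      have hhm2 : hom (c a2) = c a1 := hm2
      have hnreach : ¬ H.Reachable (c a1) (c a2) := by
        intro hr
        obtain ⟨w0⟩ := hr
        set q : H.Walk (c a1) (c a2) := (w0.toPath).1 with hq
        have hqp : q.IsPath := (w0.toPath).2
        set w' := (Walk.map hom q).copy hhm1 hhm2 with hw'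
        apply hacy'' w'
        have hedges : w'.edges = q.edges.map (Sym2.map m) := by
          rw [hw', Walk.edges_copy, Walk.edges_map]
          rfl
        have hednd : w'.edges.Nodup := by
          rw [hedges]
          refine List.Nodup.map_on ?_ hqp.isTrail.edges_nodup
          intro d1 hd1 d2 hd2 hdd
          exact hinjm d1 (hHedge d1 (Walk.edges_subset_edgeSet _ hd1)) d2
            (hHedge d2 (Walk.edges_subset_edgeSet _ hd2)) hdd
        have hlen : w'.length = q.length := by
          rw [hw', Walk.length_copy, Walk.length_map]
        have hnenil : w' ≠ Walk.nil := by
          intro h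
          have h0 : w'.length = 0 := by rw [h]; rfl
          rw [hlen] at h0
          exact hca12 (Walk.eq_of_length_eq_zero h0)
        have hsup : w'.support = q.support.map m := by
          rw [hw', Walk.support_copy, Walk.support_map]
          rfl
        have hqsup := Walk.support_eq_cons q
        have hqnd : q.support.Nodup := hqp.support_nodup
        have hhead : c a1 ∉ q.support.tail := by
          rw [hqsup] at hqnd
          exact (List.nodup_cons.1 hqnd).1
        have htlnd : q.support.tail.Nodup := by
          rw [hqsup] at hqnd
          exact (List.nodup_cons.1 hqnd).2
        have htail : w'.support.tail = q.support.tail.map m := by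
          rw [hsup, hqsup]
          rfl
        refine ⟨⟨⟨hednd⟩, hnenil⟩, ?_⟩
        rw [htail]
        refine List.Nodup.map_on ?_ htlnd
        intro x hx y hy hxy
        by_cases hx2 : x = c a2 <;> by_cases hy2 : y = c a2
        · rw [hx2, hy2]
        · exfalso
          subst hx2
          rw [hm2] at hxy
          have hyy : m y = y := by rw [hm]; simp [hy2]
          rw [hyy] at hxy
          rw [← hxy] at hy
          exact hhead hy
        · exfalso
          subst hy2
          rw [hm2] at hxy
          have hxx : m x = x := by rw [hm]; simp [hx2]
          rw [hxx] at hxy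
          rw [hxy] at hx
          exact hhead hx
        · have hxx : m x = x := by rw [hm]; simp [hx2]
          have hyy : m y = y := by rw [hm]; simp [hy2]
          rw [hxx, hyy] at hxy
          exact hxy
      have hHacy : H.IsAcyclic := by
        intro v w0 hcyc
        have honeside : ¬ (c a1 ∈ w0.support ∧ c a2 ∈ w0.support) := by
          rintro ⟨h1, h2⟩
          exact hnreach (((w0.takeUntil _ h1).reverse.reachable).trans
            ((w0.takeUntil _ h2).reachable))
        have hsupinj : ∀ x ∈ w0.support, ∀ y ∈ w0.support, m x = m y → x = y := by
          intro x hx y hy hxy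
          by_cases hx2 : x = c a2 <;> by_cases hy2 : y = c a2
          · rw [hx2, hy2]
          · exfalso
            subst hx2
            rw [hm2] at hxy
            have hyy : m y = y := by rw [hm]; simp [hy2]
            rw [hyy] at hxy
            rw [← hxy] at hy
            exact honeside ⟨hy, hx⟩
          · exfalso
            subst hy2
            rw [hm2] at hxy
            have hxx : m x = x := by rw [hm]; simp [hx2]
            rw [hxx] at hxy
            rw [hxy] at hx
            exact honeside ⟨hx, hy⟩
          · have hxx : m x = x := by rw [hm]; simp [hx2]
            have hyy : m y = y := by rw [hm]; simp [hy2]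
            rw [hxx, hyy] at hxy
            exact hxy
        apply hacy'' (Walk.map hom w0)
        refine ⟨⟨⟨?_⟩, ?_⟩, ?_⟩
        · have hed : (Walk.map hom w0).edges = w0.edges.map (Sym2.map m) := by
            rw [Walk.edges_map]
            rfl
          rw [hed]
          refine List.Nodup.map_on ?_ hcyc.isCircuit.isTrail.edges_nodup
          intro d1 hd1 d2 hd2 hdd
          exact hinjm d1 (hHedge d1 (Walk.edges_subset_edgeSet _ hd1)) d2
            (hHedge d2 (Walk.edges_subset_edgeSet _ hd2)) hdd
        · intro h
          have h0 : (Walk.map hom w0).length = 0 := by rw [h]; rfl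
          rw [Walk.length_map] at h0
          have := hcyc.three_le_length
          omega
        · have hsup : (Walk.map hom w0).support = w0.support.map m := by
            rw [Walk.support_map]
            rfl
          have hw0sup := Walk.support_eq_cons w0
          have htail : (Walk.map hom w0).support.tail = w0.support.tail.map m := by
            rw [hsup, hw0sup]
            rfl
          rw [htail]
          refine List.Nodup.map_on ?_ hcyc.support_nodup
          intro x hx y hy hxy
          have hx' : x ∈ w0.support := by rw [hw0sup]; exact List.mem_cons_of_mem _ hx
          have hy' : y ∈ w0.support := by rw [hw0sup]; exact List.mem_cons_of_mem _ hy
          exact hsupinj x hx' y hy' hxy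
      have himg : Sym2.map (fun v => if v ∈ B then v else c v) '' (↑E : Set (Sym2 V))
          = (Sym2.map (fun v => if v ∈ B then v else c v) '' (↑E'' : Set (Sym2 V))
              ∪ {s(c a1, b0)}) ∪ {s(c a2, b0)} := by
        rw [hE, Finset.coe_insert, Finset.coe_insert, Set.image_insert_eq,
          Set.image_insert_eq, hfe1, hfe2]
        ext d
        simp only [Set.mem_insert_iff, Set.mem_union, Set.mem_singleton_iff]
        tauto
      rw [himg, fromEdgeSet_union, fromEdgeSet_union]
      have hK1 : (H ⊔ SimpleGraph.fromEdgeSet {s(c a1, b0)}).IsAcyclic := by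
        apply acyclic_add_edge hHacy (show c a1 ≠ b0 from fun h => hcB1 (by rw [h]; exact hb0B))
        intro hr
        exact hcB1 (by rw [← reachable_eq_of_isolated hb0iso hr.symm]; exact hb0B)
      have hagree : ∀ u v : V, (H ⊔ SimpleGraph.fromEdgeSet {s(c a1, b0)}).Adj u v →
          u ≠ b0 → v ≠ b0 → H.Adj u v := by
        intro u v huv hu hv
        rw [sup_adj, fromEdgeSet_adj] at huv
        rcases huv with h | ⟨h1, h2⟩
        · exact h
        · exfalso
          rcases Sym2.eq_iff.1 (Set.eq_of_mem_singleton h1) with ⟨ha, hb⟩ | ⟨ha, hb⟩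
          · exact hv hb
          · exact hu ha
      have hnr2 : ¬ (H ⊔ SimpleGraph.fromEdgeSet {s(c a1, b0)}).Reachable (c a2) b0 := by
        intro hr
        obtain ⟨w0⟩ := hr
        have hqp : ((w0.toPath : _root_.SimpleGraph.Path _ _ _) :
            (H ⊔ SimpleGraph.fromEdgeSet {s(c a1, b0)}).Walk (c a2) b0).IsPath :=
          (w0.toPath).2
        have hne2 : b0 ≠ c a2 := fun h => hcB2 (by rw [← h]; exact hb0B)
        obtain ⟨u, hadj, t, ht⟩ := Walk.exists_eq_cons_of_ne hne2
          ((w0.toPath : (H ⊔ SimpleGraph.fromEdgeSet {s(c a1, b0)}).Walk (c a2) b0).reverse)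
        have hu : u = c a1 := by
          rw [sup_adj, fromEdgeSet_adj] at hadj
          rcases hadj with h | ⟨h1, h2⟩
          · exact absurd h (hb0iso u)
          · rcases Sym2.eq_iff.1 (Set.eq_of_mem_singleton h1) with ⟨ha, hb⟩ | ⟨ha, hb⟩
            · exfalso
              apply hcB1
              rw [← ha]
              exact hb0B
            · exact hb
        have hrevp := hqp.reverse
        rw [ht] at hrevp
        have hbt : b0 ∉ t.support := ((Walk.cons_isPath_iff _ _).1 hrevp).2
        have hreach := reachable_of_walk_avoid hagree t hbt
        rw [hu] at hreach
        exact hnreach hreach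
      exact acyclic_add_edge hK1 (fun h => hcB2 (by rw [h]; exact hb0B)) hnr2

end StmtAux
namespace StmtAux
open SimpleGraph
open scoped Classical

variable {V : Type*} [Fintype V] [DecidableEq V]

/-- Any acyclic edge set of a connected graph extends to a spanning tree. -/
lemma exists_spanning_tree {G : SimpleGraph V} (hc : G.Connected) {E0 : Finset (Sym2 V)}
    (hE0 : (↑E0 : Set (Sym2 V)) ⊆ G.edgeSet)
    (hac : (SimpleGraph.fromEdgeSet (↑E0 : Set (Sym2 V))).IsAcyclic) :
    ∃ T : SimpleGraph V, T ≤ G ∧ T.IsTree ∧ SimpleGraph.fromEdgeSet ↑E0 ≤ T := by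
  set fam := G.edgeFinset.powerset.filter
    (fun F => E0 ⊆ F ∧ (SimpleGraph.fromEdgeSet (↑F : Set (Sym2 V))).IsAcyclic) with hfam
  have hE0fin : E0 ⊆ G.edgeFinset := by
    intro e he
    rw [mem_edgeFinset]
    exact hE0 he
  have hfamne : fam.Nonempty :=
    ⟨E0, Finset.mem_filter.2 ⟨Finset.mem_powerset.2 hE0fin, Finset.Subset.refl _, hac⟩⟩
  obtain ⟨F, hFfam, hFmax⟩ := Finset.exists_max_image fam Finset.card hfamne
  obtain ⟨hFP, hE0F, hacF⟩ := Finset.mem_filter.1 hFfam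
  have hFsub : F ⊆ G.edgeFinset := Finset.mem_powerset.1 hFP
  set T := SimpleGraph.fromEdgeSet (↑F : Set (Sym2 V)) with hT
  have hTG : T ≤ G := by
    intro u v h
    rw [hT, fromEdgeSet_adj] at h
    have := mem_edgeFinset.1 (hFsub h.1)
    rwa [mem_edgeSet] at this
  have hE0T : SimpleGraph.fromEdgeSet (↑E0 : Set (Sym2 V)) ≤ T :=
    fromEdgeSet_mono (by exact_mod_cast hE0F)
  have hpre : ∀ u v, G.Adj u v → T.Reachable u v := by
    intro u v huv
    by_contra hnr
    have hne := huv.ne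
    have hmemF : s(u, v) ∉ F := by
      intro hmem
      exact hnr (Adj.reachable (by rw [hT, fromEdgeSet_adj]; exact ⟨hmem, hne⟩))
    have hacy2 : (SimpleGraph.fromEdgeSet (↑(insert s(u, v) F) : Set (Sym2 V))).IsAcyclic := by
      have h2 := acyclic_add_edge hacF hne hnr
      rw [Finset.coe_insert, Set.insert_eq, fromEdgeSet_union, sup_comm]
      exact h2
    have hFins : insert s(u, v) F ∈ fam := Finset.mem_filter.2
      ⟨Finset.mem_powerset.2 (Finset.insert_subset
        (mem_edgeFinset.2 ((mem_edgeSet _).2 huv)) hFsub),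
        hE0F.trans (Finset.subset_insert _ _), hacy2⟩
    have hle := hFmax _ hFins
    rw [Finset.card_insert_of_notMem hmemF] at hle
    omega
  have hreach : ∀ u v, G.Reachable u v → T.Reachable u v := by
    intro u v h
    obtain ⟨w⟩ := h
    induction w with
    | nil => exact Reachable.refl _
    | cons h p ih => exact (hpre _ _ h).trans ih
  have hTconn : T.Connected := by
    rw [connected_iff]
    exact ⟨fun u v => hreach u v (hc.preconnected u v), hc.nonempty⟩
  exact ⟨T, hTG, ⟨hTconn, hacF⟩, hE0T⟩

/-- (i) ⇒ existence of a strong unique independence spanning tree. -/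
lemma SUI_to_tree {G : SimpleGraph V} (hc : G.Connected) {S : Finset V}
    (hSsys : IsStabSystem G S) (huniq : ∀ S' : Finset V, IsStabSystem G S' → S' = S)
    (hcs : IsStableSet G Sᶜ) :
    ∃ T : SimpleGraph V, T ≤ G ∧ T.IsTree ∧ IsStrongUniqueIndep T := by
  have hhall := SUI_hall hSsys huniq hcs
  have hhall' : ∀ X ⊆ Sᶜ, X.Nonempty → X.card + 1 ≤ ((nbrF G Sᶜ X).image id).card := by
    intro X h1 h2
    rw [Finset.image_id]
    exact hhall X h1 h2
  obtain ⟨E0, hform, hdeg, hinj, hacy⟩ :=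
    core G Sᶜ.card Sᶜ id rfl hcs (fun a ha => ha) hhall'
  have hE0sub : (↑E0 : Set (Sym2 V)) ⊆ G.edgeSet := by
    intro e he
    obtain ⟨a, b, -, -, hadj, rfl⟩ := hform e he
    rwa [mem_edgeSet]
  have hacy' : (SimpleGraph.fromEdgeSet (↑E0 : Set (Sym2 V))).IsAcyclic := by
    have hfunid : (fun v : V => if v ∈ Sᶜ then v else id v) = id := by
      funext v
      split <;> rfl
    rw [hfunid, Sym2.map_id, Set.image_id] at hacy
    exact hacy
  obtain ⟨T, hTG, hTtree, hE0T⟩ := exists_spanning_tree hc hE0sub hacy'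
  have hdegT : ∀ b ∈ Sᶜ, 2 ≤ (nbrF T Sᶜ {b}).card := by
    intro b hb
    have h2 := hdeg b hb
    have h2' : 1 < (E0.filter (fun e => b ∈ e)).card := by omega
    obtain ⟨e1, he1, e2, he2, hne⟩ := Finset.one_lt_card.1 h2'
    obtain ⟨he1E, hbe1⟩ := Finset.mem_filter.1 he1
    obtain ⟨he2E, hbe2⟩ := Finset.mem_filter.1 he2
    obtain ⟨a1, b1, ha1S, hb1S, hadj1, rfl⟩ := hform _ he1E
    obtain ⟨a2, b2, ha2S, hb2S, hadj2, rfl⟩ := hform _ he2E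
    have hb1 : b = b1 := by
      rcases Sym2.mem_iff.1 hbe1 with h | h
      · exact absurd (h ▸ hb) ha1S
      · exact h
    have hb2 : b = b2 := by
      rcases Sym2.mem_iff.1 hbe2 with h | h
      · exact absurd (h ▸ hb) ha2S
      · exact h
    subst hb1
    subst hb2
    have ha12 : a1 ≠ a2 := by
      intro h
      exact hne (by rw [h])
    have hT1 : T.Adj b a1 := by
      refine (hE0T (?_ : (SimpleGraph.fromEdgeSet (↑E0 : Set (Sym2 V))).Adj a1 b)).symm
      rw [fromEdgeSet_adj]
      exact ⟨he1E, fun h => ha1S (h ▸ hb)⟩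
    have hT2 : T.Adj b a2 := by
      refine (hE0T (?_ : (SimpleGraph.fromEdgeSet (↑E0 : Set (Sym2 V))).Adj a2 b)).symm
      rw [fromEdgeSet_adj]
      exact ⟨he2E, fun h => ha2S (h ▸ hb)⟩
    refine Finset.one_lt_card.2 ⟨a1, ?_, a2, ?_, ha12⟩
    · exact mem_nbrF.2 ⟨ha1S, b, Finset.mem_singleton_self b, hT1⟩
    · exact mem_nbrF.2 ⟨ha2S, b, Finset.mem_singleton_self b, hT2⟩
  have hScT : IsStableSet T Sᶜ := stable_mono hTG hcs
  have hth := tree_hall hTtree hScT hdegT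
  obtain ⟨hsys, huni, hcc⟩ := hall_SUI hScT
    (by rw [compl_compl]; exact stable_mono hTG hSsys.1) hth
  exact ⟨T, hTG, hTtree, ⟨Sᶜᶜ, hsys, huni, hcc⟩⟩

/-- (iii) ⇒ the tree is a strong unique independence tree. -/
lemma tree_pendant_SUI {T : SimpleGraph V} (ht : T.IsTree) {C : Finset V}
    (hC : IsStableSet T C) (hC' : IsStableSet T Cᶜ) (hcard : Cᶜ.card ≤ C.card)
    (hpend : ∀ v, IsPendant T v → v ∈ C) : IsStrongUniqueIndep T := by
  have hdeg : ∀ b ∈ Cᶜ, 2 ≤ (nbrF T Cᶜ {b}).card := by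
    intro b hb
    have hbC : b ∉ C := Finset.mem_compl.1 hb
    have hnb : ∃ a, T.Adj b a := by
      by_contra hno
      push_neg at hno
      have hall : ∀ v : V, v = b := by
        intro v
        exact (reachable_eq_of_isolated (fun w => hno w)
          ((ht.isConnected.preconnected b v))).symm
      have hCempty : C = ∅ := by
        rw [Finset.eq_empty_iff_forall_notMem]
        intro x hx
        rw [hall x] at hx
        exact hbC hx
      have h0 : C.card = 0 := by rw [hCempty]; rfl
      have h1 : 1 ≤ Cᶜ.card := Finset.card_pos.2 ⟨b, hb⟩
      omega
    have hnp : ¬ IsPendant T b := fun hp => hbC (hpend b hp)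
    rw [IsPendant] at hnp
    have heq : nbrF T Cᶜ {b} = Set.toFinset (T.neighborSet b) := by
      ext a
      rw [mem_nbrF, Set.mem_toFinset]
      simp only [mem_neighborSet]
      constructor
      · rintro ⟨-, x, hx, hadj⟩
        rwa [Finset.mem_singleton.1 hx] at hadj
      · intro hadj
        refine ⟨?_, b, Finset.mem_singleton_self b, hadj⟩
        intro haC
        exact hC' b hb a haC hadj
    have hncard : (T.neighborSet b).ncard = (nbrF T Cᶜ {b}).card := by
      rw [heq, Set.ncard_eq_toFinset_card']
    obtain ⟨a, ha⟩ := hnb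
    have haC : a ∉ Cᶜ := by
      intro haC
      exact hC' b hb a haC ha
    have h1 : 1 ≤ (nbrF T Cᶜ {b}).card :=
      Finset.card_pos.2 ⟨a, mem_nbrF.2 ⟨haC, b, Finset.mem_singleton_self b, ha⟩⟩
    omega
  have hth := tree_hall ht hC' hdeg
  obtain ⟨hsys, huni, hcc⟩ := hall_SUI hC' (by rw [compl_compl]; exact hC) hth
  exact ⟨Cᶜᶜ, hsys, huni, hcc⟩

/-- (ii) ⇒ (iii) data. -/
lemma SUI_tree_to_three {T : SimpleGraph V} (ht : T.IsTree) (h : IsStrongUniqueIndep T) :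
    AlphaMinusStable T ∧ ∃ C : Finset V, IsStableSet T C ∧ IsStableSet T Cᶜ ∧
      Cᶜ.card ≤ C.card ∧ ∀ v, IsPendant T v → v ∈ C := by
  obtain ⟨S, hSsys, huniq, hcs⟩ := h
  refine ⟨SUI_alphaMinus hSsys huniq, S, hSsys.1, hcs, ?_, ?_⟩
  · have h1 := card_le_stabNum hcs
    rw [← hSsys.2] at h1
    exact h1
  · intro v hv
    by_contra hvC
    have hvSc : v ∈ Sᶜ := Finset.mem_compl.2 hvC
    have h2 := SUI_hall hSsys huniq hcs {v} (Finset.singleton_subset_iff.2 hvSc)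
      ⟨v, Finset.mem_singleton_self v⟩
    have hsub : nbrF T Sᶜ {v} ⊆ Set.toFinset (T.neighborSet v) := by
      intro a ha
      obtain ⟨-, x, hx, hadj⟩ := mem_nbrF.1 ha
      rw [Set.mem_toFinset]
      rwa [Finset.mem_singleton.1 hx] at hadj
    have hv' := hv
    rw [IsPendant, Set.ncard_eq_toFinset_card'] at hv'
    have hle := Finset.card_le_card hsub
    rw [hv'] at hle
    have hone : ({v} : Finset V).card = 1 := Finset.card_singleton v
    omega
end StmtAux
/-- For a connected graph `G`, the following are equivalent:
(i) `G` is a strong unique independence graph; (ii) `G` is bipartite and has a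
spanning tree that is a strong unique independence graph; (iii) `G` is
bipartite and has an α⁻-stable spanning tree all of whose pendant vertices lie
in a larger color class of that tree; (iv) `G` is an α⁻-stable bipartite graph
having a unique stability system, which is one of the color classes of `G`. -/
theorem stmt6 {V : Type*} [Fintype V] [DecidableEq V] (G : SimpleGraph V)
    (hc : G.Connected) :
    List.TFAE
      [ IsStrongUniqueIndep G,
        IsBipartiteGr G ∧ ∃ T : SimpleGraph V, T ≤ G ∧ T.IsTree ∧ IsStrongUniqueIndep T,
        IsBipartiteGr G ∧ ∃ T : SimpleGraph V, T ≤ G ∧ T.IsTree ∧ AlphaMinusStable T ∧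
          ∃ C : Finset V, IsStableSet T C ∧ IsStableSet T Cᶜ ∧ Cᶜ.card ≤ C.card ∧
            ∀ v : V, IsPendant T v → v ∈ C,
        AlphaMinusStable G ∧ ∃ S : Finset V, IsStabSystem G S ∧
          (∀ S' : Finset V, IsStabSystem G S' → S' = S) ∧ IsStableSet G Sᶜ ] := by
  tfae_have 1 → 2 := by
    rintro ⟨S, hsys, hun, hcs⟩
    exact ⟨⟨S, hsys.1, hcs⟩, StmtAux.SUI_to_tree hc hsys hun hcs⟩
  tfae_have 2 → 3 := by
    rintro ⟨hbip, T, hTG, hTtree, hTSUI⟩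
    obtain ⟨ham, C, h1, h2, h3, h4⟩ := StmtAux.SUI_tree_to_three hTtree hTSUI
    exact ⟨hbip, T, hTG, hTtree, ham, C, h1, h2, h3, h4⟩
  tfae_have 3 → 2 := by
    rintro ⟨hbip, T, hTG, hTtree, -, C, h1, h2, h3, h4⟩
    exact ⟨hbip, T, hTG, hTtree, StmtAux.tree_pendant_SUI hTtree h1 h2 h3 h4⟩
  tfae_have 2 → 1 := by
    rintro ⟨⟨C, hC, hC'⟩, T, hTG, hTtree, hTSUI⟩
    exact StmtAux.SUI_of_tree hTG hTtree hC hC' hTSUI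
  tfae_have 1 → 4 := by
    rintro ⟨S, hsys, hun, hcs⟩
    exact ⟨StmtAux.SUI_alphaMinus hsys hun, S, hsys, hun, hcs⟩
  tfae_have 4 → 1 := by
    rintro ⟨-, S, hsys, hun, hcs⟩
    exact ⟨S, hsys, hun, hcs⟩
  tfae_finish
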